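/- Let w be a nonempty cyclic word over an alphabet of oriented edges and let e₀ be a letter occurring in w. Then by a finite sequence of edge-surgeries (each deleting a cyclic segment between two consecutive occurrences of a repeated letter, chosen so as not to delete a fixed occurrence of e₀) one obtains a cyclic word w' such that: (1) e₀ occurs in w', (2) every letter occurs in w' at most once, and (3) every letter occurring in w' also occurs in w. -/
import Mathlib


/-- One step of edge-surgery on a cyclic word: delete the cyclic segment from one
occurrence of a repeated letter `e` up to (but not including) the next occurrence. -/
def EdgeSurgery {α : Type*} (w w' : List α) : Prop :=
  ∃ (e : α) (s t : List α), e ∉ s ∧ w ~r (e :: s ++ e :: t) ∧ w' = e :: t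

private lemma first_split {α : Type*} [DecidableEq α] {a : α} {l : List α} (h : a ∈ l) :
    ∃ s t, a ∉ s ∧ l = s ++ a :: t := by
  induction l with
  | nil => simp at h
  | cons x xs ih =>
    by_cases hx : x = a
    · exact ⟨[], xs, by simp, by simp [hx]⟩
    · have hm : a ∈ xs := by
        rcases List.mem_cons.1 h with h' | h'
        · exact absurd h'.symm hx
        · exact h'
      obtain ⟨s, t, hns, hl⟩ := ih hm
      exact ⟨x :: s, t, by simp [hns, Ne.symm hx], by simp [hl]⟩

private lemma dup_split {α : Type*} [DecidableEq α] {l : List α} (h : ¬l.Nodup) :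
    ∃ (e : α) (a s t : List α), e ∉ s ∧ l = a ++ e :: s ++ e :: t := by
  induction l with
  | nil => exact absurd List.nodup_nil h
  | cons x xs ih =>
    by_cases hx : x ∈ xs
    · obtain ⟨s, t, hns, hl⟩ := first_split hx
      exact ⟨x, [], s, t, hns, by simp [hl]⟩
    · have hxs : ¬xs.Nodup := by
        intro hnd
        exact h (List.nodup_cons.2 ⟨hx, hnd⟩)
      obtain ⟨e, a, s, t, hns, hl⟩ := ih hxs
      exact ⟨e, x :: a, s, t, hns, by simp [hl]⟩

/-- Lemma `Surgery3`: by finitely many edge-surgeries one reaches a cyclic word in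
which a prescribed letter `e₀` still occurs, every letter occurs at most once, and
all letters come from the original word. -/
theorem stmt_8 {α : Type*} [DecidableEq α] (w : List α) (e₀ : α) (h : e₀ ∈ w) :
    ∃ w' : List α, Relation.ReflTransGen EdgeSurgery w w' ∧
      e₀ ∈ w' ∧ w'.Nodup ∧ ∀ a ∈ w', a ∈ w := by
  suffices H : ∀ (n : ℕ) (w : List α), w.length ≤ n → e₀ ∈ w →
      ∃ w' : List α, Relation.ReflTransGen EdgeSurgery w w' ∧
        e₀ ∈ w' ∧ w'.Nodup ∧ ∀ a ∈ w', a ∈ w from H w.length w le_rfl h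
  intro n
  induction n with
  | zero =>
    intro w hw he
    have : w = [] := List.length_eq_zero_iff.1 (Nat.le_zero.1 hw)
    subst this; simp at he
  | succ n ih =>
    intro w hw he
    by_cases hnd : w.Nodup
    · exact ⟨w, Relation.ReflTransGen.refl, he, hnd, fun a ha => ha⟩
    · obtain ⟨x, y, rfl⟩ := List.append_of_mem he
      have hrot : (x ++ e₀ :: y) ~r (e₀ :: (y ++ x)) := by
        have := List.isRotated_append (l := x) (l' := e₀ :: y)
        simpa using this
      have hlen : (x ++ e₀ :: y).length = (y ++ x).length + 1 := by
        have := hrot.perm.length_eq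
        simp at this ⊢
        omega
      by_cases he₀u : e₀ ∈ y ++ x
      · -- e₀ itself is repeated: surgery at e₀
        obtain ⟨s, t, hns, hu⟩ := first_split he₀u
        have hrot2 : (x ++ e₀ :: y) ~r (e₀ :: s ++ e₀ :: t) := by
          rw [hu] at hrot
          simpa using hrot
        have hstep : EdgeSurgery (x ++ e₀ :: y) (e₀ :: t) :=
          ⟨e₀, s, t, hns, hrot2, rfl⟩
        have hsub : ∀ a ∈ e₀ :: t, a ∈ x ++ e₀ :: y := by
          intro a ha
          have : a ∈ e₀ :: s ++ e₀ :: t := by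
            rcases List.mem_cons.1 ha with h' | h'
            · simp [h']
            · simp [h']
          exact hrot2.perm.symm.subset this
        have hlt : (e₀ :: t).length ≤ n := by
          have hxy := hrot2.perm.length_eq
          simp only [List.length_append, List.length_cons] at hxy hw ⊢
          omega
        obtain ⟨w', hchain, he', hnd', hsub'⟩ := ih (e₀ :: t) hlt (by simp)
        exact ⟨w', Relation.ReflTransGen.head hstep hchain, he', hnd',
          fun a ha => hsub a (hsub' a ha)⟩
      · -- e₀ not repeated; find another repeated letter in u = y ++ x
        have hund : ¬(y ++ x).Nodup := by
          intro hnd'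
          apply hnd
          rw [hrot.nodup_iff]
          exact List.nodup_cons.2 ⟨he₀u, hnd'⟩
        obtain ⟨e, a, s, t, hns, hu⟩ := dup_split hund
        have hrot2 : (x ++ e₀ :: y) ~r (e :: s ++ e :: (t ++ e₀ :: a)) := by
          have h1 : (x ++ e₀ :: y) ~r ((e₀ :: a) ++ (e :: s ++ e :: t)) := by
            rw [hu] at hrot
            simpa using hrot
          have h2 : ((e₀ :: a) ++ (e :: s ++ e :: t)) ~r
              ((e :: s ++ e :: t) ++ (e₀ :: a)) := List.isRotated_append ..
          have h3 : ((e :: s ++ e :: t) ++ (e₀ :: a)) = (e :: s ++ e :: (t ++ e₀ :: a)) := by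
            simp
          exact h3 ▸ h1.trans h2
        have hstep : EdgeSurgery (x ++ e₀ :: y) (e :: (t ++ e₀ :: a)) :=
          ⟨e, s, t ++ e₀ :: a, hns, hrot2, rfl⟩
        have hsub : ∀ b ∈ e :: (t ++ e₀ :: a), b ∈ x ++ e₀ :: y := by
          intro b hb
          apply hrot2.perm.symm.subset
          rcases List.mem_cons.1 hb with h' | h'
          · simp [h']
          · simp at h' ⊢
            tauto
        have hlt : (e :: (t ++ e₀ :: a)).length ≤ n := by
          have hxy := hrot2.perm.length_eq
          simp only [List.length_append, List.length_cons] at hxy hw ⊢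
          omega
        obtain ⟨w', hchain, he', hnd', hsub'⟩ := ih (e :: (t ++ e₀ :: a)) hlt (by simp)
        exact ⟨w', Relation.ReflTransGen.head hstep hchain, he', hnd',
          fun b hb => hsub b (hsub' b hb)⟩
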